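/- The iterative sequence v_{k+1} = v_k + λ_k d_k with d_k = N₁ᵀ(N₁v_k + w₁⁻) (or its normalization) and λ_k ≥ 0 chosen so that ‖N₂v_{k+1} + w₂⁻‖₂ ≤ ε̃, produces a monotone nondecreasing sequence α(v_k) = ‖N₁v_k + w₁⁻‖₂ while every iterate remains feasible: ‖N₂v_k + w₂⁻‖₂ ≤ ε̃ for all k, provided v₁ is feasible. -/

import Mathlib

open Matrix

/-- Euclidean (ℓ₂) norm of a real vector. -/
noncomputable def enorm2 {ι : Type*} [Fintype ι] (x : ι → ℝ) : ℝ :=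
  Real.sqrt (∑ i, x i ^ 2)

lemma enorm_eq_sqrt_dot {ι : Type*} [Fintype ι] (x : ι → ℝ) :
    enorm2 x = Real.sqrt (x ⬝ᵥ x) := by
  simp [enorm2, dotProduct, pow_two]

lemma dot_self_nonneg' {ι : Type*} [Fintype ι] (x : ι → ℝ) : 0 ≤ x ⬝ᵥ x :=
  Finset.sum_nonneg fun i _ => mul_self_nonneg _

lemma enorm_nonneg' {ι : Type*} [Fintype ι] (x : ι → ℝ) : 0 ≤ enorm2 x :=
  Real.sqrt_nonneg _

lemma enorm_sq' {ι : Type*} [Fintype ι] (x : ι → ℝ) : enorm2 x ^ 2 = x ⬝ᵥ x := by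
  rw [enorm_eq_sqrt_dot, Real.sq_sqrt (dot_self_nonneg' x)]

lemma enorm_le_iff' {ι : Type*} [Fintype ι] (x : ι → ℝ) {e : ℝ} (he : 0 ≤ e) :
    enorm2 x ≤ e ↔ x ⬝ᵥ x ≤ e ^ 2 := by
  constructor
  · intro h
    rw [← enorm_sq']
    exact pow_le_pow_left₀ (enorm_nonneg' x) h 2
  · intro h
    rw [enorm_eq_sqrt_dot]
    calc Real.sqrt (x ⬝ᵥ x) ≤ Real.sqrt (e ^ 2) := Real.sqrt_le_sqrt h
    _ = e := Real.sqrt_sq he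

lemma enorm2_pos' {ι : Type*} [Fintype ι] {x : ι → ℝ} (hx : x ≠ 0) : 0 < enorm2 x := by
  rw [enorm_eq_sqrt_dot]
  apply Real.sqrt_pos.mpr
  obtain ⟨i, hi⟩ := Function.ne_iff.mp hx
  simp only [Pi.zero_apply] at hi
  exact Finset.sum_pos' (fun j _ => mul_self_nonneg _)
    ⟨i, Finset.mem_univ i, mul_self_pos.mpr hi⟩

lemma enorm_le_enorm' {ι : Type*} [Fintype ι] {x y : ι → ℝ} (h : x ⬝ᵥ x ≤ y ⬝ᵥ y) :
    enorm2 x ≤ enorm2 y := by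
  rw [enorm_eq_sqrt_dot, enorm_eq_sqrt_dot]
  exact Real.sqrt_le_sqrt h


/-- The iteration `v_{k+1} = v_k + λ_k d_k`, where `d_k = N₁ᵀ(N₁ v_k + w₁⁻)`
(or its normalization), and `λ_k` is `λ` if the trial step stays feasible, the exact
boundary step `(−rᵀd̂ + √((rᵀd̂)² − ‖r‖² + ε̃²))/‖N₂ d_k‖` otherwise (and `0` if
`N₂ d_k = 0`), keeps every iterate feasible (`‖N₂ v_k + w₂⁻‖₂ ≤ ε̃` for all `k`, given
`v₁` feasible) and makes `α(v_k) = ‖N₁ v_k + w₁⁻‖₂` monotone nondecreasing. -/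
theorem stmt19 {n q p : ℕ}
    (N₁ : Matrix (Fin n) (Fin p) ℝ) (N₂ : Matrix (Fin q) (Fin p) ℝ)
    (w₁ : Fin n → ℝ) (w₂ : Fin q → ℝ)
    (ε lam : ℝ) (hε : 0 < ε) (hlam : 0 < lam)
    (v d : ℕ → (Fin p → ℝ)) (lamk : ℕ → ℝ)
    (hfeas0 : enorm2 (N₂.mulVec (v 0) + w₂) ≤ ε)
    (hd : ∀ k, d k = N₁ᵀ.mulVec (N₁.mulVec (v k) + w₁) ∨
      (N₁ᵀ.mulVec (N₁.mulVec (v k) + w₁) ≠ 0 ∧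
        d k = (enorm2 (N₁ᵀ.mulVec (N₁.mulVec (v k) + w₁)))⁻¹ •
          N₁ᵀ.mulVec (N₁.mulVec (v k) + w₁)))
    (hlamk : ∀ k,
      (N₂.mulVec (d k) = 0 ∧ lamk k = 0) ∨
      (N₂.mulVec (d k) ≠ 0 ∧
        ((enorm2 ((N₂.mulVec (v k) + w₂) + lam • N₂.mulVec (d k)) ≤ ε ∧ lamk k = lam) ∨
         (¬ enorm2 ((N₂.mulVec (v k) + w₂) + lam • N₂.mulVec (d k)) ≤ ε ∧
           lamk k =
             (-((N₂.mulVec (v k) + w₂) ⬝ᵥ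
                 ((enorm2 (N₂.mulVec (d k)))⁻¹ • N₂.mulVec (d k))) +
               Real.sqrt (((N₂.mulVec (v k) + w₂) ⬝ᵥ
                   ((enorm2 (N₂.mulVec (d k)))⁻¹ • N₂.mulVec (d k))) ^ 2 -
                 enorm2 (N₂.mulVec (v k) + w₂) ^ 2 + ε ^ 2)) /
               enorm2 (N₂.mulVec (d k))))))
    (hstep : ∀ k, v (k + 1) = v k + lamk k • d k) :
    (∀ k, enorm2 (N₂.mulVec (v k) + w₂) ≤ ε) ∧
    Monotone (fun k => enorm2 (N₁.mulVec (v k) + w₁)) := by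
  -- Feasibility for all k
  have hfeas : ∀ k, enorm2 (N₂.mulVec (v k) + w₂) ≤ ε := by
    intro k
    induction k with
    | zero => exact hfeas0
    | succ k ih =>
      have hv : N₂.mulVec (v (k + 1)) + w₂ =
          (N₂.mulVec (v k) + w₂) + lamk k • N₂.mulVec (d k) := by
        rw [hstep k, Matrix.mulVec_add, Matrix.mulVec_smul]
        abel
      rw [hv]
      set r := N₂.mulVec (v k) + w₂ with hr
      set u := N₂.mulVec (d k) with hu
      rcases hlamk k with ⟨hu0, hl0⟩ | ⟨hu0, hcase⟩
      · rw [hl0]; simpa using ih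
      · rcases hcase with ⟨htrial, hl⟩ | ⟨_, hl⟩
        · rw [hl]; exact htrial
        · -- boundary step
          have hb : 0 < enorm2 u := enorm2_pos' hu0
          set b := enorm2 u with hbdef
          set a := r ⬝ᵥ (b⁻¹ • u) with hadef
          have hc : r ⬝ᵥ u = a * b := by
            rw [hadef, dotProduct_smul, smul_eq_mul]
            field_simp
          have hB : u ⬝ᵥ u = b * b := by
            rw [← enorm_sq' u, ← hbdef]; ring
          have hR : r ⬝ᵥ r ≤ ε ^ 2 := (enorm_le_iff' r hε.le).mp ih
          have hRs : enorm2 r ^ 2 = r ⬝ᵥ r := enorm_sq' r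
          set s := Real.sqrt (a ^ 2 - enorm2 r ^ 2 + ε ^ 2) with hsdef
          have hs : s ^ 2 = a ^ 2 - r ⬝ᵥ r + ε ^ 2 := by
            rw [hsdef, Real.sq_sqrt (by rw [hRs]; nlinarith), hRs]
          have hlb : lamk k * b = -a + s := by
            rw [hl]
            field_simp
          rw [enorm_le_iff' _ hε.le]
          have hexp : (r + lamk k • u) ⬝ᵥ (r + lamk k • u) =
              r ⬝ᵥ r + 2 * (lamk k * (r ⬝ᵥ u)) + lamk k * lamk k * (u ⬝ᵥ u) := by
            simp only [add_dotProduct, dotProduct_add, dotProduct_smul, smul_dotProduct,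
              smul_eq_mul, dotProduct_comm u r]
            ring
          rw [hexp, hc, hB]
          have heq : r ⬝ᵥ r + 2 * (lamk k * (a * b)) + lamk k * lamk k * (b * b) = ε ^ 2 := by
            linear_combination (lamk k * b + s + a) * hlb + hs
          exact le_of_eq heq
  refine ⟨hfeas, ?_⟩
  -- lamk nonneg
  have hlnn : ∀ k, 0 ≤ lamk k := by
    intro k
    rcases hlamk k with ⟨hu0, hl0⟩ | ⟨hu0, hcase⟩
    · rw [hl0]
    · rcases hcase with ⟨_, hl⟩ | ⟨_, hl⟩
      · rw [hl]; exact hlam.le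
      · set r := N₂.mulVec (v k) + w₂ with hr
        set u := N₂.mulVec (d k) with hu
        have hb : 0 < enorm2 u := enorm2_pos' hu0
        set b := enorm2 u with hbdef
        set a := r ⬝ᵥ (b⁻¹ • u) with hadef
        have hR : r ⬝ᵥ r ≤ ε ^ 2 := (enorm_le_iff' r hε.le).mp (hfeas k)
        have hRs : enorm2 r ^ 2 = r ⬝ᵥ r := enorm_sq' r
        have hsge : |a| ≤ Real.sqrt (a ^ 2 - enorm2 r ^ 2 + ε ^ 2) := by
          rw [← Real.sqrt_sq_eq_abs]
          exact Real.sqrt_le_sqrt (by rw [hRs]; nlinarith)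
        rw [hl]
        apply div_nonneg _ hb.le
        linarith [hsge, le_abs_self a]
  -- monotonicity
  apply monotone_nat_of_le_succ
  intro k
  show enorm2 (N₁.mulVec (v k) + w₁) ≤ enorm2 (N₁.mulVec (v (k + 1)) + w₁)
  have hv : N₁.mulVec (v (k + 1)) + w₁ =
      (N₁.mulVec (v k) + w₁) + lamk k • N₁.mulVec (d k) := by
    rw [hstep k, Matrix.mulVec_add, Matrix.mulVec_smul]
    abel
  rw [hv]
  set g := N₁.mulVec (v k) + w₁ with hg
  set u := N₁.mulVec (d k) with hu
  have hgu : 0 ≤ g ⬝ᵥ u := by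
    have key : ∀ x : Fin p → ℝ, g ⬝ᵥ N₁.mulVec x = (N₁ᵀ.mulVec g) ⬝ᵥ x := by
      intro x
      rw [Matrix.dotProduct_mulVec, Matrix.mulVec_transpose]
    rcases hd k with hdk | ⟨hne, hdk⟩
    · rw [hu, key, hdk, ← hg]
      exact dot_self_nonneg' _
    · rw [hu, key, hdk, ← hg, dotProduct_smul, smul_eq_mul]
      exact mul_nonneg (inv_nonneg.mpr (enorm_nonneg' _)) (dot_self_nonneg' _)
  apply enorm_le_enorm'
  have hexp : (g + lamk k • u) ⬝ᵥ (g + lamk k • u) =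
      g ⬝ᵥ g + 2 * (lamk k * (g ⬝ᵥ u)) + lamk k * lamk k * (u ⬝ᵥ u) := by
    simp only [add_dotProduct, dotProduct_add, dotProduct_smul, smul_dotProduct,
      smul_eq_mul, dotProduct_comm u g]
    ring
  rw [hexp]
  nlinarith [hlnn k, dot_self_nonneg' u, mul_nonneg (hlnn k) hgu]
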